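/- Assume k is algebraically closed. Let V be a realization of M with normal matrix W and slack matrix S = Vᵀ * W. Then the slack ideal is contained in the cycle ideal: I_M ⊆ C_S; that is, every f ∈ R for which P^N * f ∈ J for some natural number N belongs to C_S. -/

import Mathlib

open Classical Matrix MvPolynomial

/-- `V` is a realization of the matroid `M`: a set `I` is independent in `M` iff the
columns of `V` indexed by `I` are linearly independent over `k`. -/
def IsRealization {k : Type*} [Field k] {n d : ℕ} (M : Matroid (Fin n))
    (V : Matrix (Fin (d + 1)) (Fin n) k) : Prop :=
  ∀ I : Set (Fin n), M.Indep I ↔ LinearIndependent k (fun i : I => Vᵀ (i : Fin n))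

/-- `F` is a hyperplane of `M`: a flat of `M` of rank `d`. -/
def IsHyperplane {n : ℕ} (M : Matroid (Fin n)) (d : ℕ) (F : Set (Fin n)) : Prop :=
  M.IsFlat F ∧ ∃ I, M.IsBasis I F ∧ I.ncard = d

/-- `H` is a bijection onto the set of hyperplanes of `M`. -/
def HypEnum {n h : ℕ} (M : Matroid (Fin n)) (d : ℕ) (H : Fin h → Set (Fin n)) : Prop :=
  Function.Injective H ∧ ∀ F : Set (Fin n), (∃ j, H j = F) ↔ IsHyperplane M d F

/-- `M` has rank `r` : some base of `M` has cardinality `r`. -/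
def HasRank {n : ℕ} (M : Matroid (Fin n)) (r : ℕ) : Prop :=
  ∃ B, M.IsBase B ∧ B.ncard = r

/-- `W` is a normal matrix for the realization `V`: the dot product of column `j` of `W`
with column `i` of `V` is zero iff `i ∈ H j`. -/
def IsNormalMatrix {k : Type*} [Field k] {n d h : ℕ} (H : Fin h → Set (Fin n))
    (V : Matrix (Fin (d + 1)) (Fin n) k) (W : Matrix (Fin (d + 1)) (Fin h) k) : Prop :=
  ∀ i j, (∑ r : Fin (d + 1), W r j * V r i) = 0 ↔ i ∈ H j

/-- Projective equivalence of realizations. -/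
def ProjEquiv {k : Type*} [Field k] {n d : ℕ}
    (V V' : Matrix (Fin (d + 1)) (Fin n) k) : Prop :=
  ∃ (A : Matrix (Fin (d + 1)) (Fin (d + 1)) k) (b : Fin n → kˣ),
    IsUnit A ∧ V' = A * V * Matrix.diagonal (fun i => (b i : k))

/-- The index type of slack variables: pairs `(i, j)` with `i ∉ H j`. -/
abbrev SlackVar {n h : ℕ} (H : Fin h → Set (Fin n)) : Type :=
  {p : Fin n × Fin h // p.1 ∉ H p.2}

/-- The symbolic slack matrix of `M`. -/
noncomputable def symbSlack {n h : ℕ} (H : Fin h → Set (Fin n)) (k : Type*) [Field k] :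
    Matrix (Fin n) (Fin h) (MvPolynomial (SlackVar H) k) :=
  fun i j => if hij : i ∈ H j then 0 else X ⟨(i, j), hij⟩

/-- The ideal `J` generated by the `(d+2)`-minors of the symbolic slack matrix. -/
noncomputable def minorIdeal {n h : ℕ} (d : ℕ) (H : Fin h → Set (Fin n)) (k : Type*)
    [Field k] : Ideal (MvPolynomial (SlackVar H) k) :=
  Ideal.span { f | ∃ (r : Fin (d + 2) → Fin n) (c : Fin (d + 2) → Fin h),
    Function.Injective r ∧ Function.Injective c ∧
      f = ((symbSlack H k).submatrix r c).det }

/-- The product `P` of all slack variables. -/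
noncomputable def allVarsProd {n h : ℕ} (H : Fin h → Set (Fin n)) (k : Type*) [Field k] :
    MvPolynomial (SlackVar H) k :=
  ∏ e : SlackVar H, X e

/-- The slack ideal `I_M` : the saturation of `J` at `P`, as a set. -/
noncomputable def slackSet {n h : ℕ} (d : ℕ) (H : Fin h → Set (Fin n)) (k : Type*) [Field k] :
    Set (MvPolynomial (SlackVar H) k) :=
  {f | ∃ N : ℕ, allVarsProd H k ^ N * f ∈ minorIdeal d H k}

/-- The matrix `S(s)` obtained by evaluating the symbolic slack matrix at `s`. -/
noncomputable def slackEval {k : Type*} [Field k] {n h : ℕ} (H : Fin h → Set (Fin n))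
    (s : SlackVar H → k) : Matrix (Fin n) (Fin h) k :=
  fun i j => if hij : i ∈ H j then 0 else s ⟨(i, j), hij⟩

/-- Cyclic successor in `Fin m`. -/
def cycSucc {m : ℕ} (i : Fin m) : Fin m := ⟨(i.val + 1) % m, Nat.mod_lt _ i.pos⟩

/-- The cycle ideal `C_S` of a slack matrix `S`. -/
noncomputable def cycleIdeal {k : Type*} [Field k] {n h : ℕ} (H : Fin h → Set (Fin n))
    (S : Matrix (Fin n) (Fin h) k) : Ideal (MvPolynomial (SlackVar H) k) :=
  Ideal.span { f | ∃ (m : ℕ) (_ : 2 ≤ m) (a : Fin m → Fin n) (b : Fin m → Fin h)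
    (_ : Function.Injective a) (_ : Function.Injective b)
    (h1 : ∀ i, a i ∉ H (b i)) (h2 : ∀ i, a (cycSucc i) ∉ H (b i)),
    f = C (∏ i, S (a (cycSucc i)) (b i)) * ∏ i, X ⟨(a i, b i), h1 i⟩
      - C (∏ i, S (a i) (b i)) * ∏ i, X ⟨(a (cycSucc i), b i), h2 i⟩ }

section Aux
variable {k : Type*} [Field k] {n h : ℕ} {H : Fin h → Set (Fin n)}

/-- weight of a slack variable -/
noncomputable def wtFn (e : SlackVar H) : (Fin n ⊕ Fin h) →₀ ℕ :=
  Finsupp.single (Sum.inl e.1.1) 1 + Finsupp.single (Sum.inr e.1.2) 1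

noncomputable def SpFn (S : Matrix (Fin n) (Fin h) k) (α : SlackVar H →₀ ℕ) : k :=
  ∏ e : SlackVar H, S e.1.1 e.1.2 ^ α e

noncomputable def muFn (α : SlackVar H →₀ ℕ) : (Fin n ⊕ Fin h) →₀ ℕ :=
  ∑ e : SlackVar H, α e • wtFn e

variable (S : Matrix (Fin n) (Fin h) k)

lemma SpFn_add (α β : SlackVar H →₀ ℕ) : SpFn S (α + β) = SpFn S α * SpFn S β := by
  simp [SpFn, pow_add, Finset.prod_mul_distrib]

lemma SpFn_zero : SpFn S (0 : SlackVar H →₀ ℕ) = 1 := by simp [SpFn]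

lemma muFn_add (α β : SlackVar H →₀ ℕ) : (muFn (α + β)) = muFn α + muFn β := by
  simp only [muFn, Finsupp.add_apply, add_smul]
  rw [← Finset.sum_add_distrib]

lemma muFn_zero : muFn (0 : SlackVar H →₀ ℕ) = 0 := by simp [muFn]

lemma SpFn_single (e : SlackVar H) (c : ℕ) :
    SpFn S (Finsupp.single e c) = S e.1.1 e.1.2 ^ c := by
  rw [SpFn, Finset.prod_eq_single e]
  · simp
  · intro e' _ hne; simp [Finsupp.single_apply, Ne.symm hne]
  · simp

lemma muFn_single (e : SlackVar H) (c : ℕ) :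
    muFn (Finsupp.single e c) = c • wtFn e := by
  rw [muFn, Finset.sum_eq_single e]
  · simp
  · intro e' _ hne; simp [Finsupp.single_apply, Ne.symm hne]
  · simp

lemma SpFn_finsum {ι : Type*} (s : Finset ι) (σ : ι → (SlackVar H →₀ ℕ)) :
    SpFn S (∑ i ∈ s, σ i) = ∏ i ∈ s, SpFn S (σ i) := by
  classical
  induction s using Finset.induction with
  | empty => simp [SpFn_zero]
  | insert a s' hx ih => simp [Finset.sum_insert hx, Finset.prod_insert hx, SpFn_add, ih]

lemma muFn_finsum {ι : Type*} (s : Finset ι) (σ : ι → (SlackVar H →₀ ℕ)) :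
    muFn (∑ i ∈ s, σ i) = ∑ i ∈ s, muFn (σ i) := by
  classical
  induction s using Finset.induction with
  | empty => simp [muFn_zero]
  | insert a s' hx ih => simp [Finset.sum_insert hx, muFn_add, ih]

lemma SpFn_ne_zero (hS : ∀ e : SlackVar H, S e.1.1 e.1.2 ≠ 0) (α : SlackVar H →₀ ℕ) :
    SpFn S α ≠ 0 := by
  rw [SpFn]
  exact Finset.prod_ne_zero_iff.2 fun e _ => pow_ne_zero _ (hS e)

lemma muFn_inl (α : SlackVar H →₀ ℕ) (i : Fin n) :
    muFn α (Sum.inl i) = ∑ e : SlackVar H, (if e.1.1 = i then α e else 0) := by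
  rw [muFn, Finset.sum_apply']
  refine Finset.sum_congr rfl fun e _ => ?_
  simp only [Finsupp.smul_apply, wtFn, Finsupp.add_apply, Finsupp.single_apply]
  by_cases he : e.1.1 = i <;> simp [he]

lemma muFn_inr (α : SlackVar H →₀ ℕ) (j : Fin h) :
    muFn α (Sum.inr j) = ∑ e : SlackVar H, (if e.1.2 = j then α e else 0) := by
  rw [muFn, Finset.sum_apply']
  refine Finset.sum_congr rfl fun e _ => ?_
  simp only [Finsupp.smul_apply, wtFn, Finsupp.add_apply, Finsupp.single_apply]
  by_cases he : e.1.2 = j <;> simp [he]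

/-- product of monomials -/
lemma prod_monomial {σ R : Type*} [CommSemiring R] {ι : Type*} (s : Finset ι)
    (d : ι → (σ →₀ ℕ)) (c : ι → R) :
    ∏ i ∈ s, monomial (d i) (c i) = monomial (∑ i ∈ s, d i) (∏ i ∈ s, c i) := by
  classical
  induction s using Finset.induction with
  | empty => simp
  | insert a s' hx ih =>
      rw [Finset.prod_insert hx, Finset.prod_insert hx, Finset.sum_insert hx, ih, monomial_mul]

lemma prod_X_singles {σ R : Type*} [CommSemiring R] {ι : Type*} (s : Finset ι) (e : ι → σ) :
    (∏ i ∈ s, (X (e i) : MvPolynomial σ R)) =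
      monomial (∑ i ∈ s, Finsupp.single (e i) 1) 1 := by
  have : ∀ i, (X (e i) : MvPolynomial σ R) = monomial (Finsupp.single (e i) 1) 1 := fun i => rfl
  calc (∏ i ∈ s, (X (e i) : MvPolynomial σ R))
      = ∏ i ∈ s, monomial (Finsupp.single (e i) 1) (1 : R) := by
        exact Finset.prod_congr rfl fun i _ => this i
    _ = monomial (∑ i ∈ s, Finsupp.single (e i) 1) (∏ i ∈ s, (1:R)) := prod_monomial _ _ _
    _ = _ := by simp

/-- the monomial map -/
noncomputable def psiFn (S : Matrix (Fin n) (Fin h) k) :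
    MvPolynomial (SlackVar H) k →ₐ[k] MvPolynomial (Fin n ⊕ Fin h) k :=
  aeval (fun e => monomial (wtFn e) (S e.1.1 e.1.2))

lemma psiFn_monomial (α : SlackVar H →₀ ℕ) (r : k) :
    psiFn S (monomial α r) = monomial (muFn α) (r * SpFn S α) := by
  rw [psiFn, aeval_monomial]
  rw [Finsupp.prod_fintype _ _ (fun e => pow_zero _)]
  have : ∀ e : SlackVar H, (monomial (wtFn e) (S e.1.1 e.1.2)) ^ α e
      = monomial (α e • wtFn e) (S e.1.1 e.1.2 ^ α e) := fun e => monomial_pow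
  rw [Finset.prod_congr rfl fun e _ => this e, prod_monomial]
  rw [← muFn, ← SpFn]
  simp [algebraMap_eq, C_mul_monomial]



variable {α β : SlackVar H →₀ ℕ}

lemma step_col (hμ : muFn α = muFn β) (e : SlackVar H) (he : β e < α e) :
    ∃ e' : SlackVar H, α e' < β e' ∧ e'.1.2 = e.1.2 ∧ e'.1.1 ≠ e.1.1 := by
  have hsum : ∑ e' : SlackVar H, (if e'.1.2 = e.1.2 then β e' else 0)
      = ∑ e' : SlackVar H, (if e'.1.2 = e.1.2 then α e' else 0) := by
    rw [← muFn_inr, ← muFn_inr, hμ]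
  by_contra hcon
  push_neg at hcon
  have hle : ∀ e' : SlackVar H, e'.1.2 = e.1.2 → β e' ≤ α e' := by
    intro e' hcol
    by_contra hlt
    push_neg at hlt
    have hrow := hcon e' hlt hcol
    have : e' = e := Subtype.ext (Prod.ext hrow hcol)
    rw [this] at hlt; omega
  have hlt : ∑ e' : SlackVar H, (if e'.1.2 = e.1.2 then β e' else 0)
      < ∑ e' : SlackVar H, (if e'.1.2 = e.1.2 then α e' else 0) := by
    refine Finset.sum_lt_sum (fun e' _ => ?_) ⟨e, Finset.mem_univ e, ?_⟩
    · by_cases hc : e'.1.2 = e.1.2 <;> simp [hc, hle]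
    · simp [he]
  omega

lemma step_row (hμ : muFn α = muFn β) (e : SlackVar H) (he : α e < β e) :
    ∃ e' : SlackVar H, β e' < α e' ∧ e'.1.1 = e.1.1 ∧ e'.1.2 ≠ e.1.2 := by
  have hsum : ∑ e' : SlackVar H, (if e'.1.1 = e.1.1 then β e' else 0)
      = ∑ e' : SlackVar H, (if e'.1.1 = e.1.1 then α e' else 0) := by
    rw [← muFn_inl, ← muFn_inl, hμ]
  by_contra hcon
  push_neg at hcon
  have hle : ∀ e' : SlackVar H, e'.1.1 = e.1.1 → α e' ≤ β e' := by
    intro e' hrow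
    by_contra hlt
    push_neg at hlt
    have hcol := hcon e' hlt hrow
    have : e' = e := Subtype.ext (Prod.ext hrow hcol)
    rw [this] at hlt; omega
  have hlt : ∑ e' : SlackVar H, (if e'.1.1 = e.1.1 then α e' else 0)
      < ∑ e' : SlackVar H, (if e'.1.1 = e.1.1 then β e' else 0) := by
    refine Finset.sum_lt_sum (fun e' _ => ?_) ⟨e, Finset.mem_univ e, ?_⟩
    · by_cases hc : e'.1.1 = e.1.1 <;> simp [hc, hle]
    · simp [he]
  omega

lemma exists_cycle (hμ : muFn α = muFn β) (hne : α ≠ β) :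
    ∃ (m : ℕ) (_ : 2 ≤ m) (a : Fin m → Fin n) (b : Fin m → Fin h)
      (_ : Function.Injective a) (_ : Function.Injective b)
      (h1 : ∀ i, a i ∉ H (b i)) (h2 : ∀ i, a (cycSucc i) ∉ H (b i)),
      (∀ i, β ⟨(a i, b i), h1 i⟩ < α ⟨(a i, b i), h1 i⟩) ∧
      (∀ i, α ⟨(a (cycSucc i), b i), h2 i⟩ < β ⟨(a (cycSucc i), b i), h2 i⟩) := by
  -- a starting edge with α-excess
  have hstart : ∃ e : SlackVar H, β e < α e := by
    obtain ⟨e, he⟩ : ∃ e, α e ≠ β e := by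
      by_contra hc; push_neg at hc; exact hne (Finsupp.ext hc)
    rcases lt_or_gt_of_ne he with hlt | hgt
    · obtain ⟨e', he', -, -⟩ := step_row hμ e hlt; exact ⟨e', he'⟩
    · exact ⟨e, hgt⟩
  -- choice functions
  have hN : ∀ e : {e : SlackVar H // β e < α e},
      ∃ e' : SlackVar H, α e' < β e' ∧ e'.1.2 = e.1.1.2 ∧ e'.1.1 ≠ e.1.1.1 :=
    fun e => step_col hμ e.1 e.2
  choose nEdge hN1 hN2 hN3 using hN
  have hP : ∀ e : {e : SlackVar H // β e < α e},
      ∃ e' : SlackVar H, β e' < α e' ∧ e'.1.1 = (nEdge e).1.1 ∧ e'.1.2 ≠ (nEdge e).1.2 :=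
    fun e => step_row hμ (nEdge e) (hN1 e)
  choose pEdge hP1 hP2 hP3 using hP
  obtain ⟨e0, he0⟩ := hstart
  set F : {e : SlackVar H // β e < α e} → {e : SlackVar H // β e < α e} :=
    fun e => ⟨pEdge e, hP1 e⟩ with hF
  set seq : ℕ → {e : SlackVar H // β e < α e} := fun t => F^[t] ⟨e0, he0⟩ with hseqdef
  set I : ℕ → Fin n := fun t => (seq t).1.1.1 with hI
  set Jc : ℕ → Fin h := fun t => (seq t).1.1.2 with hJc
  have hseq : ∀ t, seq (t+1) = F (seq t) := fun t => Function.iterate_succ_apply' F t _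
  have fI : ∀ t, I (t+1) = (nEdge (seq t)).1.1 := by
    intro t; show (seq (t+1)).1.1.1 = _; rw [hseq]; exact hP2 (seq t)
  have fJN : ∀ t, (nEdge (seq t)).1.2 = Jc t := fun t => hN2 (seq t)
  have fIne : ∀ t, I (t+1) ≠ I t := by
    intro t; rw [fI t]; exact hN3 (seq t)
  have fJne : ∀ t, Jc (t+1) ≠ Jc t := by
    intro t; show (seq (t+1)).1.1.2 ≠ _; rw [hseq, ← fJN t]; exact hP3 (seq t)
  have fNmem : ∀ t, (I (t+1)) ∉ H (Jc t) := by
    intro t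
    have hmem := (nEdge (seq t)).2
    rw [← fI t, fJN t] at hmem
    exact hmem
  have fNval : ∀ t, α ⟨(I (t+1), Jc t), fNmem t⟩ < β ⟨(I (t+1), Jc t), fNmem t⟩ := by
    intro t
    have hel : (⟨(I (t+1), Jc t), fNmem t⟩ : SlackVar H) = nEdge (seq t) :=
      Subtype.ext (Prod.ext (fI t) (fJN t).symm)
    rw [hel]; exact hN1 (seq t)
  have fPmem : ∀ t, I t ∉ H (Jc t) := fun t => (seq t).1.2
  have fPval : ∀ t, β ⟨(I t, Jc t), fPmem t⟩ < α ⟨(I t, Jc t), fPmem t⟩ := fun t => (seq t).2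
  -- pigeonhole
  have hpig : ∃ t, ∃ s, s < t ∧ (I s = I t ∨ Jc s = Jc t) := by
    have hninj : ¬ Function.Injective (fun t : Fin (n+1) => I t.val) := by
      intro hinj
      have := Fintype.card_le_of_injective _ hinj
      simp only [Fintype.card_fin] at this
      omega
    obtain ⟨s, t, hst, hne'⟩ := Function.not_injective_iff.1 hninj
    rcases Nat.lt_or_ge s.val t.val with hlt | hge
    · exact ⟨t.val, s.val, hlt, Or.inl hst⟩
    · have : t.val < s.val := by
        rcases Nat.lt_or_ge t.val s.val with hh | hh
        · exact hh
        · exact absurd (Fin.ext (le_antisymm hh hge)) hne'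
      exact ⟨s.val, t.val, this, Or.inl hst.symm⟩
  set t0 := Nat.find hpig with ht0
  obtain ⟨s0, hs0lt, hdisj0⟩ := Nat.find_spec hpig
  have hmin : ∀ u v, u < v → v < t0 → I u ≠ I v ∧ Jc u ≠ Jc v := by
    intro u v hu hv
    constructor
    · intro hcontra; exact Nat.find_min hpig hv ⟨u, hu, Or.inl hcontra⟩
    · intro hcontra; exact Nat.find_min hpig hv ⟨u, hu, Or.inr hcontra⟩
  by_cases hrow : ∃ s', s' < t0 ∧ I s' = I t0
  · -- Case A: a row repeats at t0
    obtain ⟨s, hslt, hIs⟩ := hrow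
    have h2le : s + 2 ≤ t0 := by
      by_contra hc
      push_neg at hc
      have hts : t0 = s + 1 := by omega
      exact fIne s (by rw [← hts, ← hIs])
    set m := t0 - s with hm'
    have hm : 2 ≤ m := by omega
    set a : Fin m → Fin n := fun k => I (s + k.val) with ha
    set b : Fin m → Fin h := fun k => Jc (s + k.val) with hb
    have inja : Function.Injective a := by
      intro x y hxy
      by_contra hne'
      have hxm : x.val < m := x.isLt
      have hym : y.val < m := y.isLt
      have hvne : x.val ≠ y.val := fun hv => hne' (Fin.ext hv)
      rcases Nat.lt_or_ge x.val y.val with hlt | hge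
      · exact (hmin (s + x.val) (s + y.val) (by omega) (by omega)).1 hxy
      · exact (hmin (s + y.val) (s + x.val) (by omega) (by omega)).1 hxy.symm
    have injb : Function.Injective b := by
      intro x y hxy
      by_contra hne'
      have hxm : x.val < m := x.isLt
      have hym : y.val < m := y.isLt
      have hvne : x.val ≠ y.val := fun hv => hne' (Fin.ext hv)
      rcases Nat.lt_or_ge x.val y.val with hlt | hge
      · exact (hmin (s + x.val) (s + y.val) (by omega) (by omega)).2 hxy
      · exact (hmin (s + y.val) (s + x.val) (by omega) (by omega)).2 hxy.symm
    have h1v : ∀ i : Fin m, ∃ pf : a i ∉ H (b i),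
        β ⟨(a i, b i), pf⟩ < α ⟨(a i, b i), pf⟩ :=
      fun i => ⟨fPmem (s + i.val), fPval (s + i.val)⟩
    have hcomp : ∀ i : Fin m, ∃ t, a (cycSucc i) = I (t + 1) ∧ b i = Jc t := by
      intro i
      refine ⟨s + i.val, ?_, rfl⟩
      show I (s + (i.val + 1) % m) = I (s + i.val + 1)
      by_cases hi : i.val + 1 < m
      · rw [Nat.mod_eq_of_lt hi]
        congr 1
      · have h1' : i.val + 1 = m := by have := i.isLt; omega
        rw [h1', Nat.mod_self]
        have hts : s + i.val + 1 = t0 := by omega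
        rw [hts]
        simpa using hIs
    have h2v : ∀ i : Fin m, ∃ pf : a (cycSucc i) ∉ H (b i),
        α ⟨(a (cycSucc i), b i), pf⟩ < β ⟨(a (cycSucc i), b i), pf⟩ := by
      intro i
      obtain ⟨t, h1c, h2c⟩ := hcomp i
      rw [h1c, h2c]
      exact ⟨fNmem t, fNval t⟩
    exact ⟨m, hm, a, b, inja, injb, fun i => (h1v i).choose, fun i => (h2v i).choose,
      fun i => (h1v i).choose_spec, fun i => (h2v i).choose_spec⟩
  · -- Case B: a column repeats at t0
    push_neg at hrow
    have hJs : Jc s0 = Jc t0 := by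
      rcases hdisj0 with hc | hc
      · exact absurd hc (hrow s0 hs0lt)
      · exact hc
    have h2le : s0 + 2 ≤ t0 := by
      by_contra hc
      push_neg at hc
      have hts : t0 = s0 + 1 := by omega
      exact fJne s0 (by rw [← hts, ← hJs])
    set m := t0 - s0 with hm'
    have hm : 2 ≤ m := by omega
    set a : Fin m → Fin n := fun k => I (s0 + 1 + k.val) with ha
    set b : Fin m → Fin h := fun k => Jc (s0 + 1 + k.val) with hb
    have hIinj' : ∀ u v, u < v → v ≤ t0 → I u ≠ I v := by
      intro u v hu hv
      rcases Nat.lt_or_ge v t0 with hvlt | hvge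
      · exact (hmin u v hu hvlt).1
      · have : v = t0 := by omega
        rw [this]
        exact hrow u (by omega)
    have hJinj' : ∀ u v, s0 + 1 ≤ u → u < v → v ≤ t0 → Jc u ≠ Jc v := by
      intro u v hsu hu hv
      rcases Nat.lt_or_ge v t0 with hvlt | hvge
      · exact (hmin u v hu hvlt).2
      · have : v = t0 := by omega
        rw [this, ← hJs]
        exact fun hc => (hmin s0 u (by omega) (by omega)).2 hc.symm
    have inja : Function.Injective a := by
      intro x y hxy
      by_contra hne'
      have hxm : x.val < m := x.isLt
      have hym : y.val < m := y.isLt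
      have hvne : x.val ≠ y.val := fun hv => hne' (Fin.ext hv)
      rcases Nat.lt_or_ge x.val y.val with hlt | hge
      · exact hIinj' (s0 + 1 + x.val) (s0 + 1 + y.val) (by omega) (by omega) hxy
      · exact hIinj' (s0 + 1 + y.val) (s0 + 1 + x.val) (by omega) (by omega) hxy.symm
    have injb : Function.Injective b := by
      intro x y hxy
      by_contra hne'
      have hxm : x.val < m := x.isLt
      have hym : y.val < m := y.isLt
      have hvne : x.val ≠ y.val := fun hv => hne' (Fin.ext hv)
      rcases Nat.lt_or_ge x.val y.val with hlt | hge
      · exact hJinj' (s0 + 1 + x.val) (s0 + 1 + y.val) (by omega) (by omega) (by omega) hxy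
      · exact hJinj' (s0 + 1 + y.val) (s0 + 1 + x.val) (by omega) (by omega) (by omega) hxy.symm
    have h1v : ∀ i : Fin m, ∃ pf : a i ∉ H (b i),
        β ⟨(a i, b i), pf⟩ < α ⟨(a i, b i), pf⟩ :=
      fun i => ⟨fPmem (s0 + 1 + i.val), fPval (s0 + 1 + i.val)⟩
    have hcomp : ∀ i : Fin m, ∃ t, a (cycSucc i) = I (t + 1) ∧ b i = Jc t := by
      intro i
      by_cases hi : i.val + 1 < m
      · refine ⟨s0 + 1 + i.val, ?_, rfl⟩
        show I (s0 + 1 + (i.val + 1) % m) = I (s0 + 1 + i.val + 1)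
        rw [Nat.mod_eq_of_lt hi]
        congr 1 <;> omega
      · refine ⟨s0, ?_, ?_⟩
        · show I (s0 + 1 + (i.val + 1) % m) = I (s0 + 1)
          have h1' : i.val + 1 = m := by have := i.isLt; omega
          rw [h1', Nat.mod_self]
        · show Jc (s0 + 1 + i.val) = Jc s0
          have hts : s0 + 1 + i.val = t0 := by have := i.isLt; omega
          rw [hts]
          exact hJs.symm
    have h2v : ∀ i : Fin m, ∃ pf : a (cycSucc i) ∉ H (b i),
        α ⟨(a (cycSucc i), b i), pf⟩ < β ⟨(a (cycSucc i), b i), pf⟩ := by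
      intro i
      obtain ⟨t, h1c, h2c⟩ := hcomp i
      rw [h1c, h2c]
      exact ⟨fNmem t, fNval t⟩
    exact ⟨m, hm, a, b, inja, injb, fun i => (h1v i).choose, fun i => (h2v i).choose,
      fun i => (h1v i).choose_spec, fun i => (h2v i).choose_spec⟩


lemma sum_single_one_apply {ι E : Type*} [DecidableEq E] [Fintype ι] (f : ι → E)
    (hf : Function.Injective f) (e : E) :
    (∑ i : ι, Finsupp.single (f i) (1 : ℕ)) e
      = if e ∈ Finset.univ.image f then 1 else 0 := by
  rw [Finset.sum_apply']
  by_cases he : e ∈ Finset.univ.image f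
  · obtain ⟨i0, -, hi0⟩ := Finset.mem_image.1 he
    rw [Finset.sum_eq_single i0]
    · simp [hi0, he]
    · intro i _ hne
      rw [Finsupp.single_apply, if_neg]
      intro hc
      exact hne (hf (by rw [hc, hi0]))
    · simp
  · rw [if_neg he]
    apply Finset.sum_eq_zero
    intro i _
    rw [Finsupp.single_apply, if_neg]
    intro hc
    exact he (Finset.mem_image.2 ⟨i, Finset.mem_univ i, hc⟩)

end Aux


section Main
variable {k : Type*} [Field k] {n h : ℕ} {H : Fin h → Set (Fin n)}

set_option maxHeartbeats 1000000 in
lemma binom_mem (S : Matrix (Fin n) (Fin h) k) (hS : ∀ e : SlackVar H, S e.1.1 e.1.2 ≠ 0)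
    (α β : SlackVar H →₀ ℕ) (hμab : muFn α = muFn β) :
    C (SpFn S β) * monomial α 1 - C (SpFn S α) * monomial β 1 ∈ cycleIdeal H S := by
  suffices Hs : ∀ D : ℕ, ∀ α β : SlackVar H →₀ ℕ, muFn α = muFn β →
      (∑ e : SlackVar H, Nat.dist (α e) (β e)) = D →
      C (SpFn S β) * monomial α 1 - C (SpFn S α) * monomial β 1 ∈ cycleIdeal H S by
    exact Hs _ α β hμab rfl
  clear hμab α β
  intro D
  induction D using Nat.strong_induction_on with
  | _ D ih =>
  intro α β hμ hD
  by_cases hne : α = β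
  · subst hne
    simp only [sub_self]
    exact zero_mem _
  obtain ⟨m, hm, a, b, inja, injb, h1, h2, hPv, hNv⟩ := exists_cycle hμ hne
  haveI : NeZero m := ⟨by omega⟩
  have injeP : Function.Injective (fun i : Fin m => (⟨(a i, b i), h1 i⟩ : SlackVar H)) := by
    intro x y hxy
    exact inja (congrArg (fun e : SlackVar H => e.1.1) hxy)
  have injeN : Function.Injective
      (fun i : Fin m => (⟨(a (cycSucc i), b i), h2 i⟩ : SlackVar H)) := by
    intro x y hxy
    exact injb (congrArg (fun e : SlackVar H => e.1.2) hxy)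
  set γ : SlackVar H →₀ ℕ := ∑ i : Fin m, Finsupp.single ⟨(a i, b i), h1 i⟩ 1 with hγdef
  set δ : SlackVar H →₀ ℕ :=
    ∑ i : Fin m, Finsupp.single ⟨(a (cycSucc i), b i), h2 i⟩ 1 with hδdef
  have γap : ∀ e, γ e = if e ∈ Finset.univ.image (fun i : Fin m => (⟨(a i, b i), h1 i⟩ : SlackVar H)) then 1 else 0 :=
    fun e => sum_single_one_apply _ injeP e
  have δap : ∀ e, δ e = if e ∈ Finset.univ.image (fun i : Fin m => (⟨(a (cycSucc i), b i), h2 i⟩ : SlackVar H)) then 1 else 0 :=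
    fun e => sum_single_one_apply _ injeN e
  have hγP : ∀ e, γ e ≠ 0 → β e < α e := by
    intro e hc
    rw [γap e] at hc
    by_cases hmem : e ∈ Finset.univ.image (fun i : Fin m => (⟨(a i, b i), h1 i⟩ : SlackVar H))
    · obtain ⟨i, -, hi⟩ := Finset.mem_image.1 hmem
      rw [← hi]; exact hPv i
    · simp [hmem] at hc
  have hδN : ∀ e, δ e ≠ 0 → α e < β e := by
    intro e hc
    rw [δap e] at hc
    by_cases hmem : e ∈ Finset.univ.image (fun i : Fin m => (⟨(a (cycSucc i), b i), h2 i⟩ : SlackVar H))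
    · obtain ⟨i, -, hi⟩ := Finset.mem_image.1 hmem
      rw [← hi]; exact hNv i
    · simp [hmem] at hc
  have hγ1 : ∀ e, γ e ≤ 1 := by
    intro e; rw [γap e]; split <;> omega
  have hδ1 : ∀ e, δ e ≤ 1 := by
    intro e; rw [δap e]; split <;> omega
  have hdisj : ∀ e, γ e = 0 ∨ δ e = 0 := by
    intro e
    by_contra hc
    push_neg at hc
    have h1' := hγP e hc.1
    have h2' := hδN e hc.2
    omega
  have hγle : γ ≤ α := by
    rw [Finsupp.le_def]
    intro e
    by_cases hc : γ e = 0
    · omega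
    · have := hγP e hc
      have := hγ1 e
      omega
  set α'' : SlackVar H →₀ ℕ := α - γ + δ with hα''def
  have hα''ap : ∀ e, α'' e = α e - γ e + δ e := by
    intro e
    rw [hα''def, Finsupp.add_apply, Finsupp.tsub_apply]
  have hexp : α'' + γ = α + δ := by
    ext e
    have hle := Finsupp.le_def.1 hγle e
    have h2e := hα''ap e
    simp only [Finsupp.add_apply]
    omega
  -- cycSucc is bijective
  have hcyc1 : ∀ i : Fin m, cycSucc i = i + 1 := by
    intro i
    apply Fin.ext
    show (i.val + 1) % m = ((i : Fin m) + 1).val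
    rw [Fin.val_add, Fin.val_one', Nat.add_mod i.val 1 m, Nat.mod_eq_of_lt i.isLt]
  have hbij : Function.Bijective (cycSucc : Fin m → Fin m) := by
    have : (cycSucc : Fin m → Fin m) = fun i => i + 1 := funext hcyc1
    rw [this]
    exact (Equiv.addRight (1 : Fin m)).bijective
  have hμγδ : muFn γ = muFn δ := by
    rw [hγdef, hδdef, muFn_finsum, muFn_finsum]
    have l1 : ∀ i : Fin m, muFn (Finsupp.single (⟨(a i, b i), h1 i⟩ : SlackVar H) 1)
        = Finsupp.single (Sum.inl (a i)) 1 + Finsupp.single (Sum.inr (b i)) 1 := by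
      intro i; rw [muFn_single, one_smul]; rfl
    have l2 : ∀ i : Fin m, muFn (Finsupp.single (⟨(a (cycSucc i), b i), h2 i⟩ : SlackVar H) 1)
        = Finsupp.single (Sum.inl (a (cycSucc i))) 1 + Finsupp.single (Sum.inr (b i)) 1 := by
      intro i; rw [muFn_single, one_smul]; rfl
    rw [Finset.sum_congr rfl fun i _ => l1 i, Finset.sum_congr rfl fun i _ => l2 i,
      Finset.sum_add_distrib, Finset.sum_add_distrib]
    congr 1
    exact (hbij.sum_comp (fun x : Fin m => Finsupp.single (Sum.inl (a x)) (1:ℕ))).symm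
  have hμ'' : muFn α'' = muFn α := by
    ext x
    have hc := congrArg (fun f => muFn f x) hexp
    simp only [muFn_add, Finsupp.add_apply] at hc
    have hγδx := congrArg (fun f : (Fin n ⊕ Fin h) →₀ ℕ => f x) hμγδ
    omega
  have hSpEq : SpFn S α'' * SpFn S γ = SpFn S α * SpFn S δ := by
    rw [← SpFn_add, ← SpFn_add, hexp]
  -- the cycle generator
  have e1 : (∏ i : Fin m, S (a (cycSucc i)) (b i)) = SpFn S δ := by
    rw [hδdef, SpFn_finsum]
    refine Finset.prod_congr rfl fun i _ => ?_
    rw [SpFn_single, pow_one]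
  have e2 : (∏ i : Fin m, S (a i) (b i)) = SpFn S γ := by
    rw [hγdef, SpFn_finsum]
    refine Finset.prod_congr rfl fun i _ => ?_
    rw [SpFn_single, pow_one]
  have e3 : (∏ i : Fin m, (X (⟨(a i, b i), h1 i⟩ : SlackVar H) : MvPolynomial (SlackVar H) k))
      = monomial γ 1 := by
    rw [prod_X_singles, hγdef]
  have e4 : (∏ i : Fin m,
        (X (⟨(a (cycSucc i), b i), h2 i⟩ : SlackVar H) : MvPolynomial (SlackVar H) k))
      = monomial δ 1 := by
    rw [prod_X_singles, hδdef]
  have hgen : C (SpFn S δ) * monomial γ 1 - C (SpFn S γ) * monomial δ 1 ∈ cycleIdeal H S := by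
    apply Ideal.subset_span
    exact ⟨m, hm, a, b, inja, injb, h1, h2, by rw [e1, e2, e3, e4]⟩
  -- distance decreases
  have hdlt : (∑ e : SlackVar H, Nat.dist (α'' e) (β e)) < D := by
    rw [← hD]
    apply Finset.sum_lt_sum
    · intro e _
      rw [hα''ap e]
      have hd1 := hγ1 e
      have hd2 := hδ1 e
      rcases Nat.eq_zero_or_pos (γ e) with h0 | hpos
      · rcases Nat.eq_zero_or_pos (δ e) with h0' | hpos'
        · simp [h0, h0', Nat.dist]
        · have := hδN e (by omega)
          simp only [Nat.dist]
          omega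
      · have := hγP e (by omega)
        have h0' : δ e = 0 := by rcases hdisj e with hc | hc; omega; exact hc
        simp only [Nat.dist]
        omega
    · have hmpos : 0 < m := by omega
      set e0 : SlackVar H := ⟨(a ⟨0, hmpos⟩, b ⟨0, hmpos⟩), h1 ⟨0, hmpos⟩⟩ with he0
      refine ⟨e0, Finset.mem_univ _, ?_⟩
      have hγ0 : γ e0 = 1 := by
        rw [γap e0, if_pos]
        exact Finset.mem_image.2 ⟨⟨0, hmpos⟩, Finset.mem_univ _, rfl⟩
      have hδ0 : δ e0 = 0 := by
        rcases hdisj e0 with hc | hc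
        · omega
        · exact hc
      have hlt := hγP e0 (by omega)
      rw [hα''ap e0, hγ0, hδ0]
      simp only [Nat.dist]
      omega
  have hrec := ih _ hdlt α'' β (hμ''.trans hμ) rfl
  -- the key algebraic identity
  have hmono1 : (monomial (α - γ) 1 : MvPolynomial (SlackVar H) k) * monomial γ 1
      = monomial α 1 := by
    rw [monomial_mul, tsub_add_cancel_of_le hγle, mul_one]
  have hmono2 : (monomial (α - γ) 1 : MvPolynomial (SlackVar H) k) * monomial δ 1
      = monomial α'' 1 := by
    rw [monomial_mul, mul_one, hα''def]
  have hspC : (C (SpFn S γ) : MvPolynomial (SlackVar H) k) * C (SpFn S α'')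
      = C (SpFn S δ) * C (SpFn S α) := by
    rw [← C_mul, ← C_mul, mul_comm (SpFn S γ), hSpEq, mul_comm]
  have key : C (SpFn S δ) * (C (SpFn S β) * monomial α 1 - C (SpFn S α) * monomial β 1)
      = C (SpFn S β) * monomial (α - γ) 1
          * (C (SpFn S δ) * monomial γ 1 - C (SpFn S γ) * monomial δ 1)
        + C (SpFn S γ)
          * (C (SpFn S β) * monomial α'' 1 - C (SpFn S α'') * monomial β 1) := by
    linear_combination (-(C (SpFn S β) * C (SpFn S δ))) * hmono1
      + C (SpFn S β) * C (SpFn S γ) * hmono2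
      + (monomial β 1 : MvPolynomial (SlackVar H) k) * hspC
  have hmem : C (SpFn S δ)
      * (C (SpFn S β) * monomial α 1 - C (SpFn S α) * monomial β 1) ∈ cycleIdeal H S := by
    rw [key]
    exact add_mem (Ideal.mul_mem_left _ _ hgen) (Ideal.mul_mem_left _ _ hrec)
  have hcancel : C (SpFn S δ)⁻¹ * (C (SpFn S δ)
      * (C (SpFn S β) * monomial α 1 - C (SpFn S α) * monomial β 1))
      = C (SpFn S β) * monomial α 1 - C (SpFn S α) * monomial β 1 := by
    rw [← mul_assoc, ← C_mul, inv_mul_cancel₀ (SpFn_ne_zero S hS δ), C_1, one_mul]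
  rw [← hcancel]
  exact Ideal.mul_mem_left _ _ hmem

set_option maxHeartbeats 1000000 in
lemma mem_cycle_of_psi (S : Matrix (Fin n) (Fin h) k)
    (hS : ∀ e : SlackVar H, S e.1.1 e.1.2 ≠ 0) (f : MvPolynomial (SlackVar H) k)
    (hf : psiFn S f = 0) : f ∈ cycleIdeal H S := by
  suffices Hs : ∀ N : ℕ, ∀ f : MvPolynomial (SlackVar H) k, psiFn S f = 0 →
      f.support.card ≤ N → f ∈ cycleIdeal H S by
    exact Hs _ f hf le_rfl
  clear hf f
  intro N
  induction N with
  | zero =>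
    intro f hf hcard
    have hf0 : f = 0 := by
      rw [Nat.le_zero, Finset.card_eq_zero, MvPolynomial.support_eq_empty] at hcard
      exact hcard
    rw [hf0]
    exact zero_mem _
  | succ N ihN =>
    intro f hf hcard
    by_cases hf0 : f = 0
    · rw [hf0]; exact zero_mem _
    obtain ⟨α, hα⟩ := MvPolynomial.support_nonempty.2 hf0
    set A := f.support.filter (fun β => muFn β = muFn α) with hA
    have hαA : α ∈ A := Finset.mem_filter.2 ⟨hα, rfl⟩
    have hψf : psiFn S f
        = ∑ v ∈ f.support, monomial (muFn v) (MvPolynomial.coeff v f * SpFn S v) := by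
      conv_lhs => rw [MvPolynomial.as_sum f]
      rw [map_sum]
      exact Finset.sum_congr rfl fun v _ => psiFn_monomial S v _
    have hK : ∑ β ∈ A, MvPolynomial.coeff β f * SpFn S β = 0 := by
      have h0 : MvPolynomial.coeff (muFn α) (psiFn S f) = 0 := by rw [hf]; simp
      rw [hψf, MvPolynomial.coeff_sum] at h0
      rw [Finset.sum_congr rfl
        (fun v _ => MvPolynomial.coeff_monomial (muFn α) (muFn v) _)] at h0
      rw [hA, Finset.sum_filter]
      exact h0
    set T : (SlackVar H →₀ ℕ) → MvPolynomial (SlackVar H) k :=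
      fun β => monomial β 1 - C (SpFn S β * (SpFn S α)⁻¹) * monomial α 1 with hT
    have hTmem : ∀ β ∈ A, T β ∈ cycleIdeal H S := by
      intro β hβ
      have hμ : muFn β = muFn α := (Finset.mem_filter.1 hβ).2
      have hb := binom_mem S hS β α hμ
      have hrw : T β = C (SpFn S α)⁻¹
          * (C (SpFn S α) * monomial β 1 - C (SpFn S β) * monomial α 1) := by
        rw [hT]
        simp only [mul_sub, ← mul_assoc, ← C_mul]
        rw [inv_mul_cancel₀ (SpFn_ne_zero S hS α), C_1, one_mul,
          mul_comm (SpFn S α)⁻¹ (SpFn S β)]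
      rw [hrw]
      exact Ideal.mul_mem_left _ _ hb
    have hTψ : ∀ β ∈ A, psiFn S (T β) = 0 := by
      intro β hβ
      have hμ : muFn β = muFn α := (Finset.mem_filter.1 hβ).2
      rw [hT]
      simp only [C_mul_monomial, mul_one]
      rw [map_sub, psiFn_monomial, psiFn_monomial, one_mul, mul_assoc,
        inv_mul_cancel₀ (SpFn_ne_zero S hS α), mul_one, hμ, sub_self]
    set g : MvPolynomial (SlackVar H) k :=
      ∑ β ∈ A, C (MvPolynomial.coeff β f) * T β with hg
    have hgmem : g ∈ cycleIdeal H S :=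
      Ideal.sum_mem _ fun β hβ => Ideal.mul_mem_left _ _ (hTmem β hβ)
    have hgψ : psiFn S g = 0 := by
      rw [hg, map_sum]
      apply Finset.sum_eq_zero
      intro β hβ
      rw [_root_.map_mul, hTψ β hβ, mul_zero]
    have hgcoeff : ∀ τ, MvPolynomial.coeff τ g
        = if τ ∈ A then MvPolynomial.coeff τ f else 0 := by
      intro τ
      rw [hg, MvPolynomial.coeff_sum]
      have hterm : ∀ β ∈ A, MvPolynomial.coeff τ (C (MvPolynomial.coeff β f) * T β)
          = (if β = τ then MvPolynomial.coeff β f else 0)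
            - (MvPolynomial.coeff β f * SpFn S β) * ((SpFn S α)⁻¹ * (if α = τ then 1 else 0)) := by
        intro β hβ
        rw [hT]
        simp only [MvPolynomial.coeff_C_mul, MvPolynomial.coeff_sub,
          MvPolynomial.coeff_monomial]
        split <;> split <;> ring
      rw [Finset.sum_congr rfl hterm, Finset.sum_sub_distrib, ← Finset.sum_mul, hK, zero_mul,
        sub_zero, Finset.sum_ite_eq' A τ (fun β => MvPolynomial.coeff β f)]
    set f' := f - g with hf'
    have hf'ψ : psiFn S f' = 0 := by rw [hf', map_sub, hf, hgψ, sub_zero]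
    have hsupp : f'.support ⊆ f.support \ A := by
      intro τ hτ
      rw [MvPolynomial.mem_support_iff] at hτ
      have hco : MvPolynomial.coeff τ f' = MvPolynomial.coeff τ f
          - (if τ ∈ A then MvPolynomial.coeff τ f else 0) := by
        rw [hf', MvPolynomial.coeff_sub, hgcoeff]
      by_cases hτA : τ ∈ A
      · rw [hco, if_pos hτA, sub_self] at hτ
        exact absurd rfl hτ
      · rw [hco, if_neg hτA, sub_zero] at hτ
        exact Finset.mem_sdiff.2 ⟨MvPolynomial.mem_support_iff.2 hτ, hτA⟩
    have hcard' : f'.support.card ≤ N := by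
      have h1' := Finset.card_le_card hsupp
      have h2' : A ⊆ f.support := Finset.filter_subset _ _
      have h3' := Finset.card_sdiff_of_subset h2'
      have h4' : 1 ≤ A.card := Finset.card_pos.2 ⟨α, hαA⟩
      omega
    have hf'mem := ihN f' hf'ψ hcard'
    have hfeq : f = f' + g := by rw [hf']; ring
    rw [hfeq]
    exact add_mem hf'mem hgmem

end Main

section Glue
variable {k : Type*} [Field k] {n d h : ℕ} {H : Fin h → Set (Fin n)}

lemma det_prod_zero (A : Matrix (Fin (d + 2)) (Fin (d + 1)) k)
    (B : Matrix (Fin (d + 1)) (Fin (d + 2)) k) : (A * B).det = 0 := by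
  by_contra hd
  have hu : IsUnit (A * B) := (Matrix.isUnit_iff_isUnit_det _).2 (isUnit_iff_ne_zero.2 hd)
  have h1 := Matrix.rank_of_isUnit _ hu
  have h2 := Matrix.rank_mul_le_left A B
  have h3 := Matrix.rank_le_card_width A
  rw [h1] at h2
  simp only [Fintype.card_fin] at h2 h3
  omega

lemma monomial_two (a b : Fin n ⊕ Fin h) (s : k) :
    (monomial (Finsupp.single a 1 + Finsupp.single b 1) s : MvPolynomial (Fin n ⊕ Fin h) k)
      = X b * (X a * C s) := by
  have hX : ∀ cc : Fin n ⊕ Fin h,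
      (X cc : MvPolynomial (Fin n ⊕ Fin h) k) = monomial (Finsupp.single cc 1) 1 :=
    fun cc => rfl
  rw [hX, hX, C_apply, monomial_mul, monomial_mul]
  congr 1
  · abel
  · ring

lemma psi_minor_zero (S : Matrix (Fin n) (Fin h) k)
    (hSiff : ∀ i j, S i j = 0 ↔ i ∈ H j)
    (hdet : ∀ (r : Fin (d + 2) → Fin n) (c : Fin (d + 2) → Fin h),
      (S.submatrix r c).det = 0)
    (r : Fin (d + 2) → Fin n) (c : Fin (d + 2) → Fin h) :
    psiFn S ((symbSlack H k).submatrix r c).det = 0 := by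
  set B : Matrix (Fin (d + 2)) (Fin (d + 2)) (MvPolynomial (Fin n ⊕ Fin h) k) :=
    (S.submatrix r c).map C with hB
  have hmapdet : psiFn S ((symbSlack H k).submatrix r c).det
      = (((symbSlack H k).submatrix r c).map (psiFn S).toRingHom).det :=
    RingHom.map_det (psiFn S).toRingHom ((symbSlack H k).submatrix r c)
  have hM : ((symbSlack H k).submatrix r c).map (psiFn S).toRingHom
      = Matrix.of (fun i j => X (Sum.inr (c j))
          * (Matrix.of fun i' j' => X (Sum.inl (r i')) * B i' j') i j) := by
    refine Matrix.ext fun i j => ?_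
    show psiFn S ((symbSlack H k) (r i) (c j)) = _
    rw [symbSlack]
    by_cases hij : (r i) ∈ H (c j)
    · rw [dif_pos hij, map_zero]
      have h0 : S (r i) (c j) = 0 := (hSiff _ _).2 hij
      simp [hB, Matrix.map_apply, Matrix.submatrix_apply, h0]
    · rw [dif_neg hij]
      have hXe : psiFn S (X (⟨(r i, c j), hij⟩ : SlackVar H))
          = monomial (wtFn ⟨(r i, c j), hij⟩) (S (r i) (c j)) := aeval_X _ _
      rw [hXe]
      show monomial (Finsupp.single (Sum.inl (r i)) 1 + Finsupp.single (Sum.inr (c j)) 1)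
          (S (r i) (c j)) = _
      rw [monomial_two]
      simp [hB, Matrix.map_apply, Matrix.submatrix_apply]
  rw [hmapdet, hM, Matrix.det_mul_row, Matrix.det_mul_column]
  have hBdet : B.det = C ((S.submatrix r c).det) := (RingHom.map_det C _).symm
  rw [hBdet, hdet r c, map_zero, mul_zero, mul_zero]

end Glue

/-- over an algebraically closed field, the slack ideal is contained in the
cycle ideal of any realization. -/
theorem stmt14 {k : Type*} [Field k] [IsAlgClosed k] {n d h : ℕ} (M : Matroid (Fin n))
    (hE : M.E = Set.univ) (hrk : HasRank M (d + 1))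
    (H : Fin h → Set (Fin n)) (hH : HypEnum M d H)
    (V : Matrix (Fin (d + 1)) (Fin n) k) (hV : IsRealization M V)
    (W : Matrix (Fin (d + 1)) (Fin h) k) (hW : IsNormalMatrix H V W) :
    ∀ f ∈ slackSet d H k, f ∈ cycleIdeal H (Vᵀ * W) := by
  intro f hf
  obtain ⟨N, hfN⟩ := hf
  have hSiff : ∀ i j, (Vᵀ * W) i j = 0 ↔ i ∈ H j := by
    intro i j
    have hq : (Vᵀ * W) i j = ∑ r : Fin (d + 1), W r j * V r i := by
      rw [Matrix.mul_apply]
      exact Finset.sum_congr rfl fun x _ => by rw [Matrix.transpose_apply, mul_comm]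
    rw [hq, hW]
  have hSne : ∀ e : SlackVar H, (Vᵀ * W) e.1.1 e.1.2 ≠ 0 :=
    fun e hc => e.2 ((hSiff _ _).1 hc)
  have hdet0 : ∀ (r : Fin (d + 2) → Fin n) (c : Fin (d + 2) → Fin h),
      ((Vᵀ * W).submatrix r c).det = 0 := by
    intro r c
    rw [Matrix.submatrix_mul Vᵀ W r id c Function.bijective_id]
    exact det_prod_zero _ _
  have hker : ∀ g ∈ minorIdeal d H k, psiFn (Vᵀ * W) g = 0 := by
    intro g hg
    have hle : minorIdeal d H k ≤ RingHom.ker (psiFn (Vᵀ * W)).toRingHom := by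
      rw [minorIdeal, Ideal.span_le]
      rintro x ⟨r, c, hr, hc, rfl⟩
      exact RingHom.mem_ker.2 (psi_minor_zero (Vᵀ * W) hSiff hdet0 r c)
    exact RingHom.mem_ker.1 (hle hg)
  have hψP : psiFn (Vᵀ * W) (allVarsProd H k) ≠ 0 := by
    rw [allVarsProd, map_prod]
    apply Finset.prod_ne_zero_iff.2
    intro e _
    have hXe : psiFn (Vᵀ * W) (X e) = monomial (wtFn e) ((Vᵀ * W) e.1.1 e.1.2) := aeval_X _ _
    rw [hXe]
    exact fun hc => hSne e (monomial_eq_zero.1 hc)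
  have hψf : psiFn (Vᵀ * W) f = 0 := by
    have h1' := hker _ hfN
    rw [_root_.map_mul, map_pow] at h1'
    rcases mul_eq_zero.1 h1' with hc | hc
    · exact absurd hc (pow_ne_zero _ hψP)
    · exact hc
  exact mem_cycle_of_psi _ hSne f hψf
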